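/- Suppose all eight inclusions hold: R(Cᵀ) ⊆ R(Aᵀ), R(B) ⊆ R(A), R((A†B)ᵀ) ⊆ R(Fᵀ), R(CA†) ⊆ R(F), R(C) ⊆ R(D), R(Bᵀ) ⊆ R(Dᵀ), R(BD†) ⊆ R(G), R((D†C)ᵀ) ⊆ R(Gᵀ), where F = D - CA†B and G = A - BD†C. Then F† = D† + D†CG†BD†. -/
import Mathlib


open Matrix LinearMap

/-- `X` is the Moore-Penrose inverse of `A`. -/
def IsMoorePenrose {α β : Type*} [Fintype α] [Fintype β] [DecidableEq α] [DecidableEq β]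
    (A : Matrix α β ℝ) (X : Matrix β α ℝ) : Prop :=
  A * X * A = A ∧ X * A * X = X ∧ (A * X)ᵀ = A * X ∧ (X * A)ᵀ = X * A

private lemma mp_unique {α β : Type*} [Fintype α] [Fintype β] [DecidableEq α] [DecidableEq β]
    {F : Matrix α β ℝ} {X Y : Matrix β α ℝ}
    (hX : IsMoorePenrose F X) (hY : IsMoorePenrose F Y) : X = Y := by
  obtain ⟨hX1, hX2, hX3, hX4⟩ := hX
  obtain ⟨hY1, hY2, hY3, hY4⟩ := hY
  have hFX : F * X = F * Y := by
    calc F * X = (F * X)ᵀ := hX3.symm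
    _ = ((F * Y * F) * X)ᵀ := by rw [hY1]
    _ = ((F * Y) * (F * X))ᵀ := by simp only [Matrix.mul_assoc]
    _ = (F * X)ᵀ * (F * Y)ᵀ := by rw [Matrix.transpose_mul]
    _ = (F * X) * (F * Y) := by rw [hX3, hY3]
    _ = (F * X * F) * Y := by simp only [Matrix.mul_assoc]
    _ = F * Y := by rw [hX1]
  have hXF : X * F = Y * F := by
    calc X * F = (X * F)ᵀ := hX4.symm
    _ = (X * (F * Y * F))ᵀ := by rw [hY1]
    _ = ((X * F) * (Y * F))ᵀ := by simp only [Matrix.mul_assoc]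
    _ = (Y * F)ᵀ * (X * F)ᵀ := by rw [Matrix.transpose_mul]
    _ = (Y * F) * (X * F) := by rw [hX4, hY4]
    _ = Y * (F * X * F) := by simp only [Matrix.mul_assoc]
    _ = Y * F := by rw [hX1]
  calc X = X * F * X := hX2.symm
  _ = X * (F * X) := by rw [Matrix.mul_assoc]
  _ = X * (F * Y) := by rw [hFX]
  _ = (X * F) * Y := by rw [Matrix.mul_assoc]
  _ = (Y * F) * Y := by rw [hXF]
  _ = Y := hY2

private lemma range_fact {α β γ : Type*} [Fintype α] [Fintype β] [Fintype γ]
    [DecidableEq α] [DecidableEq β] [DecidableEq γ]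
    {N : Matrix α γ ℝ} {X : Matrix γ α ℝ} {M : Matrix α β ℝ}
    (hN : N * X * N = N)
    (h : LinearMap.range (Matrix.mulVecLin M) ≤ LinearMap.range (Matrix.mulVecLin N)) :
    N * (X * M) = M := by
  ext i j
  obtain ⟨u, hu⟩ := h ⟨Pi.single j 1, rfl⟩
  have hu' : N *ᵥ u = M *ᵥ Pi.single j 1 := hu
  have key : (N * (X * M)) *ᵥ Pi.single j 1 = M *ᵥ Pi.single j 1 := by
    calc (N * (X * M)) *ᵥ Pi.single j 1 = N *ᵥ (X *ᵥ (M *ᵥ Pi.single j 1)) := by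
          simp only [Matrix.mulVec_mulVec, Matrix.mul_assoc]
    _ = N *ᵥ (X *ᵥ (N *ᵥ u)) := by rw [hu']
    _ = (N * X * N) *ᵥ u := by simp only [Matrix.mulVec_mulVec, Matrix.mul_assoc]
    _ = N *ᵥ u := by rw [hN]
    _ = M *ᵥ Pi.single j 1 := hu'
  have := congrFun key i
  simpa using this

theorem stmt8
    {m n s p : ℕ}
    (A : Matrix (Fin m) (Fin n) ℝ) (B : Matrix (Fin m) (Fin p) ℝ)
    (C : Matrix (Fin s) (Fin n) ℝ) (D : Matrix (Fin s) (Fin p) ℝ)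
    (Ad : Matrix (Fin n) (Fin m) ℝ) (hA : IsMoorePenrose A Ad)
    (Dd : Matrix (Fin p) (Fin s) ℝ) (hD : IsMoorePenrose D Dd)
    (Fd : Matrix (Fin p) (Fin s) ℝ) (hF : IsMoorePenrose (D - C * Ad * B) Fd)
    (Gd : Matrix (Fin n) (Fin m) ℝ) (hG : IsMoorePenrose (A - B * Dd * C) Gd)
    (hCt : LinearMap.range (Matrix.mulVecLin (Cᵀ)) ≤ LinearMap.range (Matrix.mulVecLin (Aᵀ)))
    (hB : LinearMap.range (Matrix.mulVecLin (B)) ≤ LinearMap.range (Matrix.mulVecLin (A)))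
    (hAB : LinearMap.range (Matrix.mulVecLin ((Ad * B)ᵀ)) ≤ LinearMap.range (Matrix.mulVecLin ((D - C * Ad * B)ᵀ)))
    (hCA : LinearMap.range (Matrix.mulVecLin (C * Ad)) ≤ LinearMap.range (Matrix.mulVecLin (D - C * Ad * B)))
    (hC : LinearMap.range (Matrix.mulVecLin (C)) ≤ LinearMap.range (Matrix.mulVecLin (D)))
    (hBt : LinearMap.range (Matrix.mulVecLin (Bᵀ)) ≤ LinearMap.range (Matrix.mulVecLin (Dᵀ)))
    (hBD : LinearMap.range (Matrix.mulVecLin (B * Dd)) ≤ LinearMap.range (Matrix.mulVecLin (A - B * Dd * C)))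
    (hDC : LinearMap.range (Matrix.mulVecLin ((Dd * C)ᵀ)) ≤ LinearMap.range (Matrix.mulVecLin ((A - B * Dd * C)ᵀ)))
 :
    Fd = Dd + Dd * C * Gd * B * Dd := by
  obtain ⟨hA1, hA2, hA3, hA4⟩ := hA
  obtain ⟨hD1, hD2, hD3, hD4⟩ := hD
  obtain ⟨hG1, hG2, hG3, hG4⟩ := hG
  -- transposed pseudoinverse equations
  have hAt1 : Aᵀ * Adᵀ * Aᵀ = Aᵀ := by
    have := congrArg Matrix.transpose hA1
    simpa [Matrix.transpose_mul, Matrix.mul_assoc] using this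
  have hDt1 : Dᵀ * Ddᵀ * Dᵀ = Dᵀ := by
    have := congrArg Matrix.transpose hD1
    simpa [Matrix.transpose_mul, Matrix.mul_assoc] using this
  have hGt1 : (A - B * Dd * C)ᵀ * Gdᵀ * (A - B * Dd * C)ᵀ = (A - B * Dd * C)ᵀ := by
    have := congrArg Matrix.transpose hG1
    simpa [Matrix.transpose_mul, Matrix.mul_assoc] using this
  -- consequences of the range inclusions
  have f1 : A * (Ad * B) = B := range_fact hA1 hB
  have f3 : D * (Dd * C) = C := range_fact hD1 hC
  have f5 : (A - B * Dd * C) * (Gd * (B * Dd)) = B * Dd := range_fact hG1 hBD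
  have f2 : C * (Ad * A) = C := by
    have h := range_fact hAt1 hCt
    have := congrArg Matrix.transpose h
    simpa [Matrix.transpose_mul, Matrix.mul_assoc] using this
  have f4 : B * (Dd * D) = B := by
    have h := range_fact hDt1 hBt
    have := congrArg Matrix.transpose h
    simpa [Matrix.transpose_mul, Matrix.mul_assoc] using this
  have f6 : Dd * C * Gd * (A - B * Dd * C) = Dd * C := by
    have h := range_fact hGt1 hDC
    have := congrArg Matrix.transpose h
    simpa [Matrix.transpose_mul, Matrix.mul_assoc] using this
  set X : Matrix (Fin p) (Fin s) ℝ := Dd + Dd * C * Gd * B * Dd with hXdef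
  set F : Matrix (Fin s) (Fin p) ℝ := D - C * Ad * B with hFdef
  set G : Matrix (Fin m) (Fin n) ℝ := A - B * Dd * C with hGdef
  -- continuation forms of the facts
  have hBDC : B * Dd * C = A - G := by rw [hGdef]; abel
  have g2' : ∀ {q : ℕ} (Y : Matrix (Fin n) (Fin q) ℝ),
      C * (Ad * (A * Y)) = C * Y := by
    intro q Y
    rw [show C * (Ad * (A * Y)) = C * (Ad * A) * Y from by simp only [Matrix.mul_assoc], f2]
  have g3' : ∀ {q : ℕ} (Y : Matrix (Fin n) (Fin q) ℝ),
      D * (Dd * (C * Y)) = C * Y := by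
    intro q Y
    rw [show D * (Dd * (C * Y)) = D * (Dd * C) * Y from by simp only [Matrix.mul_assoc], f3]
  have g6' : ∀ {q : ℕ} (Y : Matrix (Fin n) (Fin q) ℝ),
      Dd * (C * (Gd * (G * Y))) = Dd * (C * Y) := by
    intro q Y
    rw [show Dd * (C * (Gd * (G * Y))) = Dd * C * Gd * G * Y from by
      simp only [Matrix.mul_assoc], f6, Matrix.mul_assoc]
  have rG : ∀ {q : ℕ} (Y : Matrix (Fin n) (Fin q) ℝ),
      B * (Dd * (C * Y)) = A * Y - G * Y := by
    intro q Y
    rw [show B * (Dd * (C * Y)) = B * Dd * C * Y from by simp only [Matrix.mul_assoc],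
      hBDC, Matrix.sub_mul]
  have hd1' : D * (Dd * D) = D := by rw [← Matrix.mul_assoc, hD1]
  have hd2t : Dd * (D * Dd) = Dd := by rw [← Matrix.mul_assoc, hD2]
  have hd2' : ∀ {q : ℕ} (Y : Matrix (Fin s) (Fin q) ℝ),
      Dd * (D * (Dd * Y)) = Dd * Y := by
    intro q Y
    rw [show Dd * (D * (Dd * Y)) = Dd * D * Dd * Y from by simp only [Matrix.mul_assoc], hD2]
  -- F * X = D * Dd
  have hFX : F * X = D * Dd := by
    rw [hXdef, hFdef]
    simp only [Matrix.mul_add, Matrix.add_mul, Matrix.mul_sub, Matrix.sub_mul,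
      Matrix.mul_assoc, g3', rG, f5, g2']
    abel
  -- X * F = Dd * D
  have hXF : X * F = Dd * D := by
    rw [hXdef, hFdef]
    simp only [Matrix.mul_add, Matrix.add_mul, Matrix.mul_sub, Matrix.sub_mul,
      Matrix.mul_assoc, f4, rG, f1, g6']
    abel
  -- Moore-Penrose conditions for X
  have hMP : IsMoorePenrose F X := by
    refine ⟨?_, ?_, ?_, ?_⟩
    · rw [hFX, hFdef]
      simp only [Matrix.mul_sub, Matrix.mul_assoc, hd1', g3']
    · rw [hXF, hXdef]
      simp only [Matrix.mul_add, Matrix.mul_assoc, hd2t, hd2']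
    · rw [hFX]; exact hD3
    · rw [hXF]; exact hD4
  exact mp_unique hF hMP
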